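/- arXiv:1901.07198 — 3 statements merged into one kernel-verified Lean document; each statement's English description precedes it below -/
import Mathlib

section
/- The local pressure function x ↦ P_μ(x,f,φ) is defined μ-almost everywhere, is f-invariant (P_μ(f(x),f,φ) = P_μ(x,f,φ) μ-a.e.), and satisfies ∫ P_μ(x,f,φ) dμ = h_μ(f) + ∫ φ dμ, i.e. its integral equals the metric pressure P_μ(f,φ). -/
set_option linter.unusedSectionVars false
set_option linter.unusedVariables false

open MeasureTheory Filter Set Topology
open scoped ENNReal NNReal

/-- The `n`-th dynamical ball of `f` at `x` with radius `ε`. -/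
def dynBall {X : Type*} [MetricSpace X] (f : X → X) (x : X) (ε : ℝ) (n : ℕ) : Set X :=
  {y | ∀ i < n, dist (f^[i] x) (f^[i] y) < ε}

/-- The `n`-th Birkhoff sum of `φ` along `f` at `x`. -/
def birkhoffSum' {X : Type*} (f : X → X) (φ : X → ℝ) (n : ℕ) (x : X) : ℝ :=
  ∑ i ∈ Finset.range n, φ (f^[i] x)

/-- The quantity `(-log μ(B_n^f(x,ε)) + S_n^f φ(x)) / n`. -/
noncomputable def presSeq {X : Type*} [MetricSpace X] [MeasurableSpace X]
    (μ : Measure X) (f : X → X) (φ : X → ℝ) (x : X) (ε : ℝ) (n : ℕ) : ℝ :=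
  (-Real.log ((μ (dynBall f x ε n)).toReal) + birkhoffSum' f φ n x) / n

/-- The quantity `(-log μ(B_n^f(x,ε))) / n`. -/
noncomputable def entSeq {X : Type*} [MetricSpace X] [MeasurableSpace X]
    (μ : Measure X) (f : X → X) (x : X) (ε : ℝ) (n : ℕ) : ℝ :=
  (-Real.log ((μ (dynBall f x ε n)).toReal)) / n

section LimsupArith

lemma bddAbove_add_tendsto {u w : ℕ → ℝ} (hub : IsBoundedUnder (· ≤ ·) atTop u)
    {c : ℝ} (hw : Tendsto w atTop (𝓝 c)) :
    IsBoundedUnder (· ≤ ·) atTop (fun n => u n + w n) := by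
  obtain ⟨B, hB⟩ := hub
  rw [eventually_map] at hB
  have hw1 : ∀ᶠ n in atTop, w n ≤ c + 1 := hw.eventually (eventually_le_nhds (by linarith))
  exact ⟨B + (c + 1), eventually_map.2 ((hB.and hw1).mono fun n ⟨h1, h2⟩ => by
    simp only; linarith)⟩

lemma bddBelow_add_tendsto {u w : ℕ → ℝ} (hlb : IsBoundedUnder (· ≥ ·) atTop u)
    {c : ℝ} (hw : Tendsto w atTop (𝓝 c)) :
    IsBoundedUnder (· ≥ ·) atTop (fun n => u n + w n) := by
  obtain ⟨B, hB⟩ := hlb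
  rw [eventually_map] at hB
  have hw1 : ∀ᶠ n in atTop, c - 1 ≤ w n := hw.eventually (eventually_ge_nhds (by linarith))
  exact ⟨B + (c - 1), eventually_map.2 ((hB.and hw1).mono fun n ⟨h1, h2⟩ => by
    simp only; linarith)⟩

lemma limsup_add_tendsto_zero {u w : ℕ → ℝ} (hub : IsBoundedUnder (· ≤ ·) atTop u)
    (hlb : IsBoundedUnder (· ≥ ·) atTop u) (hw : Tendsto w atTop (𝓝 0)) :
    limsup (fun n => u n + w n) atTop = limsup u atTop := by
  have hub' : IsBoundedUnder (· ≤ ·) atTop (fun n => u n + w n) := bddAbove_add_tendsto hub hw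
  have hlb' : IsBoundedUnder (· ≥ ·) atTop (fun n => u n + w n) := bddBelow_add_tendsto hlb hw
  have key1 : ∀ δ : ℝ, 0 < δ → limsup (fun n => u n + w n) atTop ≤ limsup u atTop + δ := by
    intro δ hδ
    have h1 : ∀ᶠ n in atTop, u n + w n ≤ u n + δ :=
      (hw.eventually (eventually_le_nhds hδ)).mono fun n h => by linarith
    calc limsup (fun n => u n + w n) atTop ≤ limsup (fun n => u n + δ) atTop :=
          limsup_le_limsup h1 hlb'.isCoboundedUnder_le
            (by obtain ⟨B, hB⟩ := hub; rw [eventually_map] at hB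
                exact ⟨B + δ, eventually_map.2 (hB.mono fun n h => by simp only; linarith)⟩)
      _ = limsup u atTop + δ := limsup_add_const atTop u δ hub hlb.isCoboundedUnder_le
  have key2 : ∀ δ : ℝ, 0 < δ → limsup u atTop ≤ limsup (fun n => u n + w n) atTop + δ := by
    intro δ hδ
    have h1 : ∀ᶠ n in atTop, u n ≤ (u n + w n) + δ :=
      (hw.eventually (eventually_ge_nhds (neg_lt_zero.2 hδ))).mono fun n h => by linarith
    calc limsup u atTop ≤ limsup (fun n => (u n + w n) + δ) atTop :=
          limsup_le_limsup h1 hlb.isCoboundedUnder_le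
            (by obtain ⟨B, hB⟩ := hub'; rw [eventually_map] at hB
                exact ⟨B + δ, eventually_map.2 (hB.mono fun n h => by simp only; linarith)⟩)
      _ = limsup (fun n => u n + w n) atTop + δ :=
          limsup_add_const atTop _ δ hub' hlb'.isCoboundedUnder_le
  exact le_antisymm (le_of_forall_pos_le_add key1) (le_of_forall_pos_le_add key2)

lemma liminf_add_tendsto_zero {u w : ℕ → ℝ} (hub : IsBoundedUnder (· ≤ ·) atTop u)
    (hlb : IsBoundedUnder (· ≥ ·) atTop u) (hw : Tendsto w atTop (𝓝 0)) :
    liminf (fun n => u n + w n) atTop = liminf u atTop := by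
  have hub' : IsBoundedUnder (· ≤ ·) atTop (fun n => u n + w n) := bddAbove_add_tendsto hub hw
  have hlb' : IsBoundedUnder (· ≥ ·) atTop (fun n => u n + w n) := bddBelow_add_tendsto hlb hw
  have key1 : ∀ δ : ℝ, 0 < δ → liminf (fun n => u n + w n) atTop ≤ liminf u atTop + δ := by
    intro δ hδ
    have h1 : ∀ᶠ n in atTop, u n + w n ≤ u n + δ :=
      (hw.eventually (eventually_le_nhds hδ)).mono fun n h => by linarith
    calc liminf (fun n => u n + w n) atTop ≤ liminf (fun n => u n + δ) atTop :=
          liminf_le_liminf h1 hlb'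
            (by obtain ⟨B, hB⟩ := hub; rw [eventually_map] at hB
                exact IsBoundedUnder.isCoboundedUnder_ge
                  ⟨B + δ, eventually_map.2 (hB.mono fun n h => by simp only; linarith)⟩)
      _ = liminf u atTop + δ := liminf_add_const atTop u δ hub.isCoboundedUnder_ge hlb
  have key2 : ∀ δ : ℝ, 0 < δ → liminf u atTop ≤ liminf (fun n => u n + w n) atTop + δ := by
    intro δ hδ
    have h1 : ∀ᶠ n in atTop, u n ≤ (u n + w n) + δ :=
      (hw.eventually (eventually_ge_nhds (neg_lt_zero.2 hδ))).mono fun n h => by linarith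
    calc liminf u atTop ≤ liminf (fun n => (u n + w n) + δ) atTop :=
          liminf_le_liminf h1 hlb
            (by obtain ⟨B, hB⟩ := hub'; rw [eventually_map] at hB
                exact IsBoundedUnder.isCoboundedUnder_ge
                  ⟨B + δ, eventually_map.2 (hB.mono fun n h => by simp only; linarith)⟩)
      _ = liminf (fun n => u n + w n) atTop + δ :=
          liminf_add_const atTop _ δ hub'.isCoboundedUnder_ge hlb'
  exact le_antisymm (le_of_forall_pos_le_add key1) (le_of_forall_pos_le_add key2)

lemma limsup_add_tendsto {u v : ℕ → ℝ} (hub : IsBoundedUnder (· ≤ ·) atTop u)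
    (hlb : IsBoundedUnder (· ≥ ·) atTop u) {c : ℝ} (hv : Tendsto v atTop (𝓝 c)) :
    limsup (fun n => u n + v n) atTop = limsup u atTop + c := by
  have h0 : Tendsto (fun n => v n - c) atTop (𝓝 0) := by
    simpa using hv.sub_const c
  have hub2 : IsBoundedUnder (· ≤ ·) atTop (fun n => u n + c) := by
    obtain ⟨B, hB⟩ := hub; rw [eventually_map] at hB
    exact ⟨B + c, eventually_map.2 (hB.mono fun n h => by simp only; linarith)⟩
  have hlb2 : IsBoundedUnder (· ≥ ·) atTop (fun n => u n + c) := by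
    obtain ⟨B, hB⟩ := hlb; rw [eventually_map] at hB
    exact ⟨B + c, eventually_map.2 (hB.mono fun n h => by simp only; linarith)⟩
  calc limsup (fun n => u n + v n) atTop
      = limsup (fun n => (u n + c) + (v n - c)) atTop := by
        congr 1; funext n; ring
    _ = limsup (fun n => u n + c) atTop := limsup_add_tendsto_zero hub2 hlb2 h0
    _ = limsup u atTop + c := limsup_add_const atTop u c hub hlb.isCoboundedUnder_le

lemma liminf_add_tendsto {u v : ℕ → ℝ} (hub : IsBoundedUnder (· ≤ ·) atTop u)
    (hlb : IsBoundedUnder (· ≥ ·) atTop u) {c : ℝ} (hv : Tendsto v atTop (𝓝 c)) :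
    liminf (fun n => u n + v n) atTop = liminf u atTop + c := by
  have h0 : Tendsto (fun n => v n - c) atTop (𝓝 0) := by
    simpa using hv.sub_const c
  have hub2 : IsBoundedUnder (· ≤ ·) atTop (fun n => u n + c) := by
    obtain ⟨B, hB⟩ := hub; rw [eventually_map] at hB
    exact ⟨B + c, eventually_map.2 (hB.mono fun n h => by simp only; linarith)⟩
  have hlb2 : IsBoundedUnder (· ≥ ·) atTop (fun n => u n + c) := by
    obtain ⟨B, hB⟩ := hlb; rw [eventually_map] at hB
    exact ⟨B + c, eventually_map.2 (hB.mono fun n h => by simp only; linarith)⟩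
  calc liminf (fun n => u n + v n) atTop
      = liminf (fun n => (u n + c) + (v n - c)) atTop := by
        congr 1; funext n; ring
    _ = liminf (fun n => u n + c) atTop := liminf_add_tendsto_zero hub2 hlb2 h0
    _ = liminf u atTop + c := liminf_add_const atTop u c hub.isCoboundedUnder_ge hlb

end LimsupArith

section BorelCantelli

variable {X : Type*} [MetricSpace X] [CompactSpace X] [MeasurableSpace X] [BorelSpace X]

lemma dynBall_mono {f : X → X} {x : X} {ε1 ε2 : ℝ} (h : ε1 ≤ ε2) (n : ℕ) :
    dynBall f x ε1 n ⊆ dynBall f x ε2 n := fun y hy i hi => lt_of_lt_of_le (hy i hi) h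

lemma exists_dynBall_lower (μ : Measure X) [IsProbabilityMeasure μ]
    (f : X → X) (hf : Continuous f) {ε : ℝ} (hε : 0 < ε) :
    ∃ t : ℝ, ∀ᵐ x ∂μ, ∀ᶠ (n : ℕ) in atTop,
      ENNReal.ofReal (Real.exp (-(t * (n : ℝ)))) ≤ μ (dynBall f x ε n) := by
  have hne : Nonempty X := by
    by_contra h
    rw [not_nonempty_iff] at h
    have h1 : μ univ = 1 := measure_univ
    rw [Set.univ_eq_empty_iff.2 h] at h1
    simp at h1
  obtain ⟨s, hs⟩ := isCompact_univ.elim_finite_subcover (fun x : X => Metric.ball x (ε/4))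
    (fun _ => Metric.isOpen_ball)
    (fun x _ => Set.mem_iUnion.2 ⟨x, Metric.mem_ball_self (by linarith)⟩)
  set N := s.card with hNdef
  have hNpos : 0 < N := by
    rcases hne with ⟨x0⟩
    have hx0 := hs (Set.mem_univ x0)
    rw [Set.mem_iUnion₂] at hx0
    obtain ⟨y, hy, -⟩ := hx0
    exact Finset.card_pos.2 ⟨y, hy⟩
  set e : Fin N → X := fun i => (s.equivFin.symm i : X) with he
  set V : ℕ → Set X := fun k => if h : k < N then Metric.ball (e ⟨k, h⟩) (ε/4) else ∅ with hV
  set A : ℕ → Set X := disjointed V with hA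
  have hVmeas : ∀ k, MeasurableSet (V k) := by
    intro k
    rw [hV]
    dsimp only
    split
    · exact measurableSet_ball
    · exact MeasurableSet.empty
  have hAmeas : ∀ k, MeasurableSet (A k) := MeasurableSet.disjointed hVmeas
  -- every point is in some cell `A i` with `i < N`
  have hcover : ∀ x : X, ∃ i : Fin N, x ∈ A (i : ℕ) := by
    intro x
    have hxV : x ∈ ⋃ k, V k := by
      have hx0 := hs (Set.mem_univ x)
      rw [Set.mem_iUnion₂] at hx0
      obtain ⟨y, hy, hxy⟩ := hx0
      refine Set.mem_iUnion.2 ⟨(s.equivFin ⟨y, hy⟩ : ℕ), ?_⟩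
      rw [hV]
      dsimp only
      rw [dif_pos (s.equivFin ⟨y, hy⟩).isLt]
      have : e ⟨(s.equivFin ⟨y, hy⟩ : ℕ), (s.equivFin ⟨y, hy⟩).isLt⟩ = y := by
        rw [he]
        simp only [Fin.eta, Equiv.symm_apply_apply]
      rwa [this]
    rw [← iUnion_disjointed, ← hA] at hxV
    obtain ⟨k, hk⟩ := Set.mem_iUnion.1 hxV
    have hkN : k < N := by
      by_contra hkN
      have : A k ⊆ V k := disjointed_subset V k
      have := this hk
      rw [hV] at this
      dsimp only at this
      rw [dif_neg hkN] at this
      exact this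
    exact ⟨⟨k, hkN⟩, hk⟩
  -- points in the same cell are `ε/2`-close
  have hdiam : ∀ k, ∀ x ∈ A k, ∀ y ∈ A k, dist x y < ε/2 := by
    intro k x hx y hy
    have hx' := disjointed_subset V k hx
    have hy' := disjointed_subset V k hy
    rw [hV] at hx' hy'
    dsimp only at hx' hy'
    by_cases hkN : k < N
    · rw [dif_pos hkN] at hx' hy'
      rw [Metric.mem_ball] at hx' hy'
      calc dist x y ≤ dist x (e ⟨k, hkN⟩) + dist y (e ⟨k, hkN⟩) := dist_triangle_right _ _ _
        _ < ε/2 := by linarith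
    · rw [dif_neg hkN] at hx'
      exact absurd hx' (Set.notMem_empty x)
  -- cylinders
  set cyl : ∀ n : ℕ, (Fin n → Fin N) → Set X :=
    fun n w => ⋂ i : Fin n, f^[(i : ℕ)] ⁻¹' A (w i) with hcyl
  have hcylmeas : ∀ n w, MeasurableSet (cyl n w) := fun n w =>
    MeasurableSet.iInter fun i => (hAmeas _).preimage (hf.measurable.iterate _)
  have hcylmem : ∀ n (x : X), ∃ w, x ∈ cyl n w := by
    intro n x
    have h1 : ∀ i : Fin n, ∃ j : Fin N, f^[(i : ℕ)] x ∈ A (j : ℕ) := fun i => hcover _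
    choose w hw using h1
    exact ⟨w, Set.mem_iInter.2 hw⟩
  have hcylsub : ∀ n (w : Fin n → Fin N) (x : X), x ∈ cyl n w → cyl n w ⊆ dynBall f x ε n := by
    intro n w x hx y hy i hi
    have h1 := Set.mem_iInter.1 hx ⟨i, hi⟩
    have h2 := Set.mem_iInter.1 hy ⟨i, hi⟩
    calc dist (f^[i] x) (f^[i] y) < ε/2 := hdiam _ _ h1 _ h2
      _ ≤ ε := by linarith
  set t : ℝ := Real.log N + 1 with ht
  refine ⟨t, ?_⟩
  set b : ℕ → ℝ≥0∞ := fun n => ENNReal.ofReal (Real.exp (-(t * n))) with hb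
  set S : ℕ → Set X := fun n => {x | μ (dynBall f x ε n) < b n} with hS
  have hSbound : ∀ n, μ (S n) ≤ (N ^ n : ℕ) * b n := by
    intro n
    classical
    set T : Finset (Fin n → Fin N) := Finset.univ.filter (fun w => μ (cyl n w) < b n) with hT
    have hsub : S n ⊆ ⋃ w ∈ T, cyl n w := by
      intro x hx
      obtain ⟨w, hw⟩ := hcylmem n x
      have h1 : μ (cyl n w) ≤ μ (dynBall f x ε n) := measure_mono (hcylsub n w x hw)
      have h2 : μ (cyl n w) < b n := lt_of_le_of_lt h1 hx
      exact Set.mem_biUnion (Finset.mem_filter.2 ⟨Finset.mem_univ _, h2⟩) hw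
    calc μ (S n) ≤ μ (⋃ w ∈ T, cyl n w) := measure_mono hsub
      _ ≤ ∑ w ∈ T, μ (cyl n w) := measure_biUnion_finset_le T _
      _ ≤ ∑ _w ∈ T, b n := Finset.sum_le_sum fun w hw => (Finset.mem_filter.1 hw).2.le
      _ = T.card • b n := Finset.sum_const _
      _ = (T.card : ℝ≥0∞) * b n := nsmul_eq_mul _ _
      _ ≤ ((N ^ n : ℕ) : ℝ≥0∞) * b n := by
          refine mul_le_mul_left ?_ _
          have hcard : T.card ≤ N ^ n := by
            refine le_trans (Finset.card_le_card (Finset.filter_subset _ _)) ?_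
            rw [Finset.card_univ, Fintype.card_fun]
            simp
          exact_mod_cast hcard
  -- summability
  have hq1 : Real.exp (-1) < 1 := Real.exp_lt_one_iff.2 (by norm_num)
  have hgeom : Summable (fun n : ℕ => Real.exp (-1) ^ n) :=
    summable_geometric_of_lt_one (Real.exp_pos _).le hq1
  have hterm : ∀ n : ℕ, ((N ^ n : ℕ) : ℝ≥0∞) * b n = ENNReal.ofReal (Real.exp (-1) ^ n) := by
    intro n
    rw [hb]
    dsimp only
    have h1 : ((N ^ n : ℕ) : ℝ≥0∞) = ENNReal.ofReal ((N : ℝ) ^ n) := by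
      rw [← ENNReal.ofReal_natCast]
      push_cast
      ring_nf
    rw [h1, ← ENNReal.ofReal_mul (by positivity)]
    congr 1
    have h2 : Real.exp (-(t * n)) = Real.exp (-t) ^ n := by
      rw [← Real.exp_nat_mul]
      ring_nf
    rw [h2, ← mul_pow]
    congr 1
    rw [ht, neg_add, Real.exp_add, Real.exp_neg, Real.exp_log (by exact_mod_cast hNpos),
      ← mul_assoc, mul_inv_cancel₀ (by exact_mod_cast hNpos.ne'), one_mul]
  have hsum : (∑' n, μ (S n)) ≠ ⊤ := by
    have h1 : (∑' n, μ (S n)) ≤ ∑' n : ℕ, ENNReal.ofReal (Real.exp (-1) ^ n) := by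
      refine ENNReal.tsum_le_tsum fun n => ?_
      rw [← hterm n]
      exact hSbound n
    have h2 : (∑' n : ℕ, ENNReal.ofReal (Real.exp (-1) ^ n)) ≠ ⊤ := by
      rw [← ENNReal.ofReal_tsum_of_nonneg (fun n => by positivity) hgeom]
      exact ENNReal.ofReal_ne_top
    exact fun h => h2 (top_le_iff.1 (h ▸ h1))
  filter_upwards [ae_eventually_notMem hsum] with x hx
  filter_upwards [hx] with n hn
  rw [hS] at hn
  simpa using not_lt.1 hn

lemma ae_entSeq_bdd (μ : Measure X) [IsProbabilityMeasure μ]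
    (f : X → X) (hf : Continuous f) :
    ∀ᵐ x ∂μ, ∀ ε : ℝ, 0 < ε → IsBoundedUnder (· ≤ ·) atTop (entSeq μ f x ε) := by
  have key : ∀ k : ℕ, ∃ t : ℝ, ∀ᵐ x ∂μ, ∀ᶠ (n : ℕ) in atTop,
      ENNReal.ofReal (Real.exp (-(t * (n : ℝ)))) ≤ μ (dynBall f x (1/(k+1)) n) :=
    fun k => exists_dynBall_lower μ f hf (by positivity)
  choose t ht using key
  rw [← ae_all_iff] at ht
  filter_upwards [ht] with x hx ε hε
  obtain ⟨k, hk⟩ := exists_nat_one_div_lt hε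
  refine ⟨max (t k) 0, ?_⟩
  rw [eventually_map]
  filter_upwards [hx k, eventually_ge_atTop 1] with n hn hn1
  have hsub : dynBall f x (1/(k+1)) n ⊆ dynBall f x ε n := dynBall_mono hk.le n
  have hle : ENNReal.ofReal (Real.exp (-(t k * n))) ≤ μ (dynBall f x ε n) :=
    le_trans hn (measure_mono hsub)
  have hfin : μ (dynBall f x ε n) ≠ ⊤ := measure_ne_top μ _
  have h2 : Real.exp (-(t k * n)) ≤ (μ (dynBall f x ε n)).toReal :=
    (ENNReal.ofReal_le_iff_le_toReal hfin).1 hle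
  have hlog : -(t k * n) ≤ Real.log ((μ (dynBall f x ε n)).toReal) := by
    calc -(t k * n) = Real.log (Real.exp (-(t k * n))) := (Real.log_exp _).symm
      _ ≤ _ := Real.log_le_log (Real.exp_pos _) h2
  have hnpos : (0:ℝ) < n := by exact_mod_cast hn1
  show entSeq μ f x ε n ≤ max (t k) 0
  unfold entSeq
  rw [div_le_iff₀ hnpos]
  calc -Real.log ((μ (dynBall f x ε n)).toReal) ≤ t k * n := by linarith
    _ ≤ max (t k) 0 * n := mul_le_mul_of_nonneg_right (le_max_left _ _) hnpos.le

lemma entSeq_nonneg (μ : Measure X) [IsProbabilityMeasure μ]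
    (f : X → X) (x : X) (ε : ℝ) (n : ℕ) : 0 ≤ entSeq μ f x ε n := by
  unfold entSeq
  apply div_nonneg _ (Nat.cast_nonneg n)
  rw [neg_nonneg]
  apply Real.log_nonpos ENNReal.toReal_nonneg
  exact ENNReal.toReal_mono ENNReal.one_ne_top prob_le_one |>.trans_eq ENNReal.toReal_one

end BorelCantelli

section Birkhoff

variable {X : Type*} [MeasurableSpace X]

lemma birkhoffSum'_zero (f : X → X) (g : X → ℝ) (x : X) : birkhoffSum' f g 0 x = 0 := by
  simp [birkhoffSum']

lemma birkhoffSum'_succ (f : X → X) (g : X → ℝ) (n : ℕ) (x : X) :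
    birkhoffSum' f g (n+1) x = birkhoffSum' f g n x + g (f^[n] x) :=
  Finset.sum_range_succ _ _

lemma birkhoffSum'_succ' (f : X → X) (g : X → ℝ) (n : ℕ) (x : X) :
    birkhoffSum' f g (n+1) x = g x + birkhoffSum' f g n (f x) := by
  unfold birkhoffSum'
  rw [Finset.sum_range_succ']
  simp only [Function.iterate_succ_apply, Function.iterate_zero_apply]
  exact add_comm _ _

lemma measurable_birkhoffSum' {f : X → X} (hfm : Measurable f) {g : X → ℝ}
    (hgm : Measurable g) (n : ℕ) : Measurable (birkhoffSum' f g n) := by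
  unfold birkhoffSum'
  exact Finset.measurable_sum _ fun i _ => hgm.comp (hfm.iterate i)

lemma abs_birkhoffSum'_le (f : X → X) {g : X → ℝ} {C : ℝ} (hC : ∀ x, |g x| ≤ C)
    (n : ℕ) (x : X) : |birkhoffSum' f g n x| ≤ n * C := by
  calc |birkhoffSum' f g n x| ≤ ∑ i ∈ Finset.range n, |g (f^[i] x)| :=
        Finset.abs_sum_le_sum_abs _ _
    _ ≤ ∑ _i ∈ Finset.range n, C := Finset.sum_le_sum fun i _ => hC _
    _ = n * C := by rw [Finset.sum_const, Finset.card_range, nsmul_eq_mul]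

noncomputable def maxBirk {X : Type*} (f : X → X) (g : X → ℝ) : ℕ → X → ℝ
  | 0 => fun _ => 0
  | (n+1) => fun x => max (maxBirk f g n x) (birkhoffSum' f g (n+1) x)

lemma maxBirk_nonneg (f : X → X) (g : X → ℝ) (n : ℕ) (x : X) : 0 ≤ maxBirk f g n x := by
  induction n with
  | zero => exact le_refl _
  | succ n ih => exact le_trans ih (le_max_left _ _)

lemma maxBirk_succ_le (f : X → X) (g : X → ℝ) (n : ℕ) (x : X) :
    maxBirk f g n x ≤ maxBirk f g (n+1) x := le_max_left _ _

lemma maxBirk_mono (f : X → X) (g : X → ℝ) {m n : ℕ} (h : m ≤ n) (x : X) :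
    maxBirk f g m x ≤ maxBirk f g n x := by
  induction n, h using Nat.le_induction with
  | base => exact le_refl _
  | succ n _ ih => exact le_trans ih (maxBirk_succ_le f g n x)

lemma birkhoffSum'_le_maxBirk (f : X → X) (g : X → ℝ) (n : ℕ) (x : X) :
    birkhoffSum' f g n x ≤ maxBirk f g n x := by
  cases n with
  | zero => rw [birkhoffSum'_zero]; exact maxBirk_nonneg f g 0 x
  | succ n => exact le_max_right _ _

lemma measurable_maxBirk {f : X → X} (hfm : Measurable f) {g : X → ℝ} (hgm : Measurable g)
    (n : ℕ) : Measurable (maxBirk f g n) := by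
  induction n with
  | zero => exact measurable_const
  | succ n ih => exact ih.max (measurable_birkhoffSum' hfm hgm (n+1))

lemma maxBirk_le (f : X → X) {g : X → ℝ} {C : ℝ} (hC0 : 0 ≤ C) (hC : ∀ x, |g x| ≤ C)
    (n : ℕ) (x : X) : maxBirk f g n x ≤ n * C := by
  induction n with
  | zero => simp [maxBirk]
  | succ n ih =>
    refine max_le (le_trans ih ?_) (le_trans (le_abs_self _)
      (abs_birkhoffSum'_le f hC (n+1) x))
    have : (n : ℝ) ≤ (n : ℝ) + 1 := by linarith
    push_cast
    nlinarith

lemma maxBirk_key (f : X → X) (g : X → ℝ) (n : ℕ) (x : X) :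
    maxBirk f g n x ≤ max 0 (g x + maxBirk f g n (f x)) := by
  induction n with
  | zero => exact le_max_left _ _
  | succ n ih =>
    refine max_le ?_ ?_
    · exact le_trans ih (max_le_max le_rfl
        (add_le_add_right (maxBirk_succ_le f g n (f x)) _))
    · rw [birkhoffSum'_succ']
      refine le_max_of_le_right (add_le_add_right ?_ _)
      exact le_trans (birkhoffSum'_le_maxBirk f g n (f x)) (maxBirk_succ_le f g n (f x))

lemma exists_birkhoffSum'_pos_of_maxBirk_pos {f : X → X} {g : X → ℝ} {n : ℕ} {x : X}
    (h : 0 < maxBirk f g n x) : ∃ k, 0 < birkhoffSum' f g k x := by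
  induction n with
  | zero => exact absurd h (lt_irrefl _)
  | succ n ih =>
    rcases lt_max_iff.1 h with h' | h'
    · exact ih h'
    · exact ⟨n+1, h'⟩

lemma integrable_of_abs_le (μ : Measure X) [IsProbabilityMeasure μ] {u : X → ℝ}
    (hu : Measurable u) {D : ℝ} (hD : ∀ x, |u x| ≤ D) : Integrable u μ :=
  (integrable_const D).mono' hu.aestronglyMeasurable (ae_of_all _ fun x => by
    simpa using hD x)

/-- The maximal ergodic theorem. -/
lemma maximal_ergodic (μ : Measure X) [IsProbabilityMeasure μ] {f : X → X}
    (hfm : Measurable f) (hinv : MeasurePreserving f μ μ) {g : X → ℝ} (hgm : Measurable g)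
    {C : ℝ} (hC0 : 0 ≤ C) (hC : ∀ x, |g x| ≤ C) :
    0 ≤ ∫ x in {y | ∃ n, 0 < birkhoffSum' f g n y}, g x ∂μ := by
  set M := maxBirk f g with hM
  have hMmeas : ∀ n, Measurable (M n) := measurable_maxBirk hfm hgm
  have hMabs : ∀ n x, |M n x| ≤ n * C := fun n x => abs_le.2
    ⟨le_trans (by nlinarith [Nat.cast_nonneg (α := ℝ) n]) (maxBirk_nonneg f g n x),
      maxBirk_le f hC0 hC n x⟩
  have hMint : ∀ n, Integrable (M n) μ := fun n =>
    integrable_of_abs_le μ (hMmeas n) (hMabs n)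
  have hMfint : ∀ n, Integrable (fun x => M n (f x)) μ := fun n =>
    integrable_of_abs_le μ ((hMmeas n).comp hfm) (fun x => hMabs n (f x))
  have hgint : Integrable g μ := integrable_of_abs_le μ hgm hC
  set A : ℕ → Set X := fun n => {x | 0 < M n x} with hA
  have hAmeas : ∀ n, MeasurableSet (A n) := fun n =>
    measurableSet_lt measurable_const (hMmeas n)
  have step : ∀ n, 0 ≤ ∫ x in A n, g x ∂μ := by
    intro n
    have hkey : ∀ x ∈ A n, M n x - M n (f x) ≤ g x := by
      intro x hx
      rcases le_max_iff.1 (maxBirk_key f g n x) with h | h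
      · exact absurd h (not_le.2 hx)
      · linarith
    have hMf_eq : ∫ x, M n (f x) ∂μ = ∫ x, M n x ∂μ := by
      rw [← MeasureTheory.integral_map hfm.aemeasurable (hMmeas n).aestronglyMeasurable,
        hinv.map_eq]
    have h2 : ∫ x in A n, (M n x - M n (f x)) ∂μ ≤ ∫ x in A n, g x ∂μ :=
      setIntegral_mono_on ((hMint n).sub (hMfint n)).integrableOn hgint.integrableOn
        (hAmeas n) hkey
    have h3 : ∫ x in A n, (M n x - M n (f x)) ∂μ
        = ∫ x in A n, M n x ∂μ - ∫ x in A n, M n (f x) ∂μ :=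
      integral_sub (hMint n).integrableOn (hMfint n).integrableOn
    have h4 : ∫ x in A n, M n x ∂μ = ∫ x, M n x ∂μ := by
      have heq : (A n).indicator (M n) = M n := by
        funext x
        by_cases hx : x ∈ A n
        · rw [Set.indicator_of_mem hx]
        · rw [Set.indicator_of_notMem hx]
          exact le_antisymm (maxBirk_nonneg f g n x) (not_lt.1 hx)
      rw [← integral_indicator (hAmeas n), heq]
    have h5 : ∫ x in A n, M n (f x) ∂μ ≤ ∫ x, M n (f x) ∂μ :=
      setIntegral_le_integral (hMfint n) (ae_of_all _ fun x => maxBirk_nonneg f g n (f x))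
    linarith
  have hAsub : ∀ m n, m ≤ n → A m ⊆ A n := fun m n h x hx =>
    lt_of_lt_of_le hx (maxBirk_mono f g h x)
  have hAumeas : MeasurableSet (⋃ n, A n) := MeasurableSet.iUnion hAmeas
  have hpt : ∀ x, Tendsto (fun n => (A n).indicator g x) atTop
      (𝓝 ((⋃ n, A n).indicator g x)) := by
    intro x
    by_cases hx : x ∈ ⋃ n, A n
    · obtain ⟨n0, hn0⟩ := Set.mem_iUnion.1 hx
      rw [Set.indicator_of_mem hx]
      refine tendsto_const_nhds.congr' ?_
      filter_upwards [eventually_ge_atTop n0] with n hn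
      rw [Set.indicator_of_mem (hAsub n0 n hn hn0)]
    · rw [Set.indicator_of_notMem hx]
      refine tendsto_const_nhds.congr fun n => ?_
      rw [Set.indicator_of_notMem (fun hmem => hx (Set.mem_iUnion.2 ⟨n, hmem⟩))]
  have hconv : Tendsto (fun n => ∫ x, (A n).indicator g x ∂μ) atTop
      (𝓝 (∫ x, (⋃ n, A n).indicator g x ∂μ)) := by
    refine tendsto_integral_of_dominated_convergence (fun _ => C)
      (fun n => (hgm.indicator (hAmeas n)).aestronglyMeasurable) (integrable_const C)
      (fun n => ae_of_all _ fun x => ?_) (ae_of_all _ hpt)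
    rw [Real.norm_eq_abs]
    by_cases hx : x ∈ A n
    · rw [Set.indicator_of_mem hx]; exact hC x
    · rw [Set.indicator_of_notMem hx]; simpa using hC0
  have hlim : 0 ≤ ∫ x, (⋃ n, A n).indicator g x ∂μ := by
    refine ge_of_tendsto hconv (Eventually.of_forall fun n => ?_)
    rw [integral_indicator (hAmeas n)]
    exact step n
  have hsetEq : {y | ∃ n, 0 < birkhoffSum' f g n y} = ⋃ n, A n := by
    ext x
    constructor
    · rintro ⟨n, hn⟩
      exact Set.mem_iUnion.2 ⟨n, lt_of_lt_of_le hn (birkhoffSum'_le_maxBirk f g n x)⟩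
    · intro hx
      obtain ⟨n, hn⟩ := Set.mem_iUnion.1 hx
      exact exists_birkhoffSum'_pos_of_maxBirk_pos hn
  rw [hsetEq, ← integral_indicator hAumeas]
  exact hlim

end Birkhoff


section BirkhoffAE

variable {X : Type*} [MeasurableSpace X]

lemma abs_avg_le (f : X → X) {φ : X → ℝ} {C : ℝ} (hC0 : 0 ≤ C) (hC : ∀ x, |φ x| ≤ C)
    (n : ℕ) (x : X) : |birkhoffSum' f φ n x / n| ≤ C := by
  cases n with
  | zero => simpa [birkhoffSum'_zero] using hC0
  | succ n =>
    have hnpos : (0:ℝ) < ((n+1 : ℕ) : ℝ) := by positivity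
    rw [abs_div, abs_of_pos hnpos, div_le_iff₀ hnpos]
    calc |birkhoffSum' f φ (n+1) x| ≤ ((n+1 : ℕ) : ℝ) * C := abs_birkhoffSum'_le f hC (n+1) x
      _ = C * ((n+1 : ℕ) : ℝ) := mul_comm _ _

lemma avg_bddAbove (f : X → X) {φ : X → ℝ} {C : ℝ} (hC0 : 0 ≤ C) (hC : ∀ x, |φ x| ≤ C)
    (x : X) : IsBoundedUnder (· ≤ ·) atTop (fun n : ℕ => birkhoffSum' f φ n x / n) :=
  ⟨C, eventually_map.2 (Eventually.of_forall fun n => (abs_le.1 (abs_avg_le f hC0 hC n x)).2)⟩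

lemma avg_bddBelow (f : X → X) {φ : X → ℝ} {C : ℝ} (hC0 : 0 ≤ C) (hC : ∀ x, |φ x| ≤ C)
    (x : X) : IsBoundedUnder (· ≥ ·) atTop (fun n : ℕ => birkhoffSum' f φ n x / n) :=
  ⟨-C, eventually_map.2 (Eventually.of_forall fun n => (abs_le.1 (abs_avg_le f hC0 hC n x)).1)⟩

lemma avg_shift (f : X → X) (φ : X → ℝ) (x : X) (n : ℕ) :
    birkhoffSum' f φ n (f x) / n
      = birkhoffSum' f φ n x / n + (φ (f^[n] x) - φ x) / n := by
  have h : birkhoffSum' f φ n (f x) = birkhoffSum' f φ n x + (φ (f^[n] x) - φ x) := by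
    have h1 := birkhoffSum'_succ' f φ n x
    have h2 := birkhoffSum'_succ f φ n x
    linarith
  rw [h, add_div]

lemma tendsto_shift_term (f : X → X) {φ : X → ℝ} {C : ℝ} (hC0 : 0 ≤ C)
    (hC : ∀ x, |φ x| ≤ C) (x : X) :
    Tendsto (fun n : ℕ => (φ (f^[n] x) - φ x) / n) atTop (𝓝 0) := by
  refine squeeze_zero_norm (fun n => ?_) (tendsto_const_div_atTop_nhds_zero_nat (2*C))
  cases n with
  | zero => simp
  | succ n =>
    have hnpos : (0:ℝ) < ((n+1 : ℕ) : ℝ) := by positivity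
    have habs : |φ (f^[n+1] x) - φ x| ≤ 2*C := by
      calc |φ (f^[n+1] x) - φ x| ≤ |φ (f^[n+1] x)| + |φ x| := abs_sub _ _
        _ ≤ 2*C := by linarith [hC (f^[n+1] x), hC x]
    rw [Real.norm_eq_abs, abs_div, abs_of_pos hnpos]
    gcongr

lemma limsup_avg_shift (f : X → X) {φ : X → ℝ} {C : ℝ} (hC0 : 0 ≤ C)
    (hC : ∀ x, |φ x| ≤ C) (x : X) :
    limsup (fun n : ℕ => birkhoffSum' f φ n (f x) / n) atTop
      = limsup (fun n : ℕ => birkhoffSum' f φ n x / n) atTop := by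
  have h : (fun n : ℕ => birkhoffSum' f φ n (f x) / n)
      = fun n => birkhoffSum' f φ n x / n + (φ (f^[n] x) - φ x) / n :=
    funext (avg_shift f φ x)
  rw [h]
  exact limsup_add_tendsto_zero (avg_bddAbove f hC0 hC x) (avg_bddBelow f hC0 hC x)
    (tendsto_shift_term f hC0 hC x)

lemma liminf_avg_shift (f : X → X) {φ : X → ℝ} {C : ℝ} (hC0 : 0 ≤ C)
    (hC : ∀ x, |φ x| ≤ C) (x : X) :
    liminf (fun n : ℕ => birkhoffSum' f φ n (f x) / n) atTop
      = liminf (fun n : ℕ => birkhoffSum' f φ n x / n) atTop := by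
  have h : (fun n : ℕ => birkhoffSum' f φ n (f x) / n)
      = fun n => birkhoffSum' f φ n x / n + (φ (f^[n] x) - φ x) / n :=
    funext (avg_shift f φ x)
  rw [h]
  exact liminf_add_tendsto_zero (avg_bddAbove f hC0 hC x) (avg_bddBelow f hC0 hC x)
    (tendsto_shift_term f hC0 hC x)

lemma birkhoff_cross_null (μ : Measure X) [IsProbabilityMeasure μ] {f : X → X}
    (hfm : Measurable f) (hinv : MeasurePreserving f μ μ) {φ : X → ℝ} (hφm : Measurable φ)
    {C : ℝ} (hC0 : 0 ≤ C) (hC : ∀ x, |φ x| ≤ C) {a b : ℝ} (hab : a < b) :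
    μ {x | liminf (fun n : ℕ => birkhoffSum' f φ n x / n) atTop < a ∧
        b < limsup (fun n : ℕ => birkhoffSum' f φ n x / n) atTop} = 0 := by
  classical
  set φund : X → ℝ := fun x => liminf (fun n : ℕ => birkhoffSum' f φ n x / n) atTop with hund
  set φbar : X → ℝ := fun x => limsup (fun n : ℕ => birkhoffSum' f φ n x / n) atTop with hbar
  have havgm : ∀ n : ℕ, Measurable (fun x => birkhoffSum' f φ n x / n) := fun n =>
    (measurable_birkhoffSum' hfm hφm n).div_const _
  have hundm : Measurable φund := Measurable.liminf havgm
  have hbarm : Measurable φbar := Measurable.limsup havgm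
  set E : Set X := {x | φund x < a ∧ b < φbar x} with hE
  have hEmeas : MeasurableSet E := (measurableSet_lt hundm measurable_const).inter
    (measurableSet_lt measurable_const hbarm)
  have hEf : ∀ y, f y ∈ E ↔ y ∈ E := by
    intro y
    simp only [hE, Set.mem_setOf_eq]
    rw [show φund (f y) = φund y from liminf_avg_shift f hC0 hC y,
      show φbar (f y) = φbar y from limsup_avg_shift f hC0 hC y]
  have hEiter : ∀ (k : ℕ) (y : X), f^[k] y ∈ E ↔ y ∈ E := by
    intro k
    induction k with
    | zero => intro y; rfl
    | succ k ih =>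
      intro y
      rw [Function.iterate_succ_apply']
      exact (hEf _).trans (ih y)
  have hφint : Integrable φ μ := integrable_of_abs_le μ hφm hC
  -- first application of the maximal ergodic theorem
  have key1 : (μ E).toReal * b ≤ ∫ x in E, φ x ∂μ := by
    set g : X → ℝ := E.indicator (fun y => φ y - b) with hg
    have hgm : Measurable g := (hφm.sub measurable_const).indicator hEmeas
    have hgb : ∀ x, |g x| ≤ C + |b| := by
      intro x
      by_cases hx : x ∈ E
      · rw [hg, Set.indicator_of_mem hx]
        calc |φ x - b| ≤ |φ x| + |b| := abs_sub _ _
          _ ≤ C + |b| := by linarith [hC x]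
      · rw [hg, Set.indicator_of_notMem hx]
        simp only [abs_zero]
        positivity
    have hSg : ∀ x ∈ E, ∀ n : ℕ, birkhoffSum' f g n x = birkhoffSum' f φ n x - n * b := by
      intro x hx n
      unfold birkhoffSum'
      have hterm : ∀ i ∈ Finset.range n, g (f^[i] x) = φ (f^[i] x) - b := fun i _ =>
        Set.indicator_of_mem ((hEiter i x).2 hx) _
      rw [Finset.sum_congr rfl hterm, Finset.sum_sub_distrib, Finset.sum_const,
        Finset.card_range, nsmul_eq_mul]
    have hA : {y | ∃ n, 0 < birkhoffSum' f g n y} = E := by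
      ext x
      simp only [Set.mem_setOf_eq]
      constructor
      · rintro ⟨n, hn⟩
        by_contra hx
        have hz : birkhoffSum' f g n x = 0 := by
          unfold birkhoffSum'
          exact Finset.sum_eq_zero fun i _ =>
            Set.indicator_of_notMem (fun hmem => hx ((hEiter i x).1 hmem)) _
        rw [hz] at hn
        exact absurd hn (lt_irrefl 0)
      · intro hx
        have hfreq : ∃ᶠ n in atTop, b < birkhoffSum' f φ n x / n :=
          frequently_lt_of_lt_limsup (avg_bddBelow f hC0 hC x).isCoboundedUnder_le hx.2
        obtain ⟨n, hnb, hn1⟩ := (hfreq.and_eventually (eventually_ge_atTop 1)).exists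
        refine ⟨n, ?_⟩
        rw [hSg x hx n]
        have hnpos : (0:ℝ) < n := by exact_mod_cast hn1
        have := (lt_div_iff₀ hnpos).1 hnb
        linarith
    have h0 := maximal_ergodic μ hfm hinv hgm (by positivity) hgb
    rw [hA] at h0
    have heq : ∫ x in E, g x ∂μ = ∫ x in E, (φ x - b) ∂μ :=
      setIntegral_congr_fun hEmeas fun x hx => Set.indicator_of_mem hx _
    have hsplit : ∫ x in E, (φ x - b) ∂μ = ∫ x in E, φ x ∂μ - (μ E).toReal * b := by
      rw [integral_sub hφint.integrableOn
        (integrableOn_const (measure_ne_top μ E)), setIntegral_const, smul_eq_mul]; rfl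
    rw [heq, hsplit] at h0
    linarith
  -- second application
  have key2 : ∫ x in E, φ x ∂μ ≤ (μ E).toReal * a := by
    set g : X → ℝ := E.indicator (fun y => a - φ y) with hg
    have hgm : Measurable g := ((measurable_const).sub hφm).indicator hEmeas
    have hgb : ∀ x, |g x| ≤ C + |a| := by
      intro x
      by_cases hx : x ∈ E
      · rw [hg, Set.indicator_of_mem hx]
        calc |a - φ x| ≤ |a| + |φ x| := abs_sub _ _
          _ ≤ C + |a| := by linarith [hC x]
      · rw [hg, Set.indicator_of_notMem hx]
        simp only [abs_zero]
        positivity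
    have hSg : ∀ x ∈ E, ∀ n : ℕ, birkhoffSum' f g n x = n * a - birkhoffSum' f φ n x := by
      intro x hx n
      unfold birkhoffSum'
      have hterm : ∀ i ∈ Finset.range n, g (f^[i] x) = a - φ (f^[i] x) := fun i _ =>
        Set.indicator_of_mem ((hEiter i x).2 hx) _
      rw [Finset.sum_congr rfl hterm, Finset.sum_sub_distrib, Finset.sum_const,
        Finset.card_range, nsmul_eq_mul]
    have hA : {y | ∃ n, 0 < birkhoffSum' f g n y} = E := by
      ext x
      simp only [Set.mem_setOf_eq]
      constructor
      · rintro ⟨n, hn⟩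
        by_contra hx
        have hz : birkhoffSum' f g n x = 0 := by
          unfold birkhoffSum'
          exact Finset.sum_eq_zero fun i _ =>
            Set.indicator_of_notMem (fun hmem => hx ((hEiter i x).1 hmem)) _
        rw [hz] at hn
        exact absurd hn (lt_irrefl 0)
      · intro hx
        have hfreq : ∃ᶠ n in atTop, birkhoffSum' f φ n x / n < a :=
          frequently_lt_of_liminf_lt (avg_bddAbove f hC0 hC x).isCoboundedUnder_ge hx.1
        obtain ⟨n, hnb, hn1⟩ := (hfreq.and_eventually (eventually_ge_atTop 1)).exists
        refine ⟨n, ?_⟩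
        rw [hSg x hx n]
        have hnpos : (0:ℝ) < n := by exact_mod_cast hn1
        have := (div_lt_iff₀ hnpos).1 hnb
        linarith
    have h0 := maximal_ergodic μ hfm hinv hgm (by positivity) hgb
    rw [hA] at h0
    have heq : ∫ x in E, g x ∂μ = ∫ x in E, (a - φ x) ∂μ :=
      setIntegral_congr_fun hEmeas fun x hx => Set.indicator_of_mem hx _
    have hsplit : ∫ x in E, (a - φ x) ∂μ = (μ E).toReal * a - ∫ x in E, φ x ∂μ := by
      rw [integral_sub (integrableOn_const (measure_ne_top μ E) : IntegrableOn (fun _ => a) E μ)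
        hφint.integrableOn, setIntegral_const, smul_eq_mul]; rfl
    rw [heq, hsplit] at h0
    linarith
  have hm0 : (μ E).toReal = 0 := by
    have h1 : (0:ℝ) ≤ (μ E).toReal := ENNReal.toReal_nonneg
    nlinarith
  rcases ENNReal.toReal_eq_zero_iff _ |>.1 hm0 with h | h
  · exact h
  · exact absurd h (measure_ne_top μ E)

lemma birkhoff_ae (μ : Measure X) [IsProbabilityMeasure μ] {f : X → X}
    (hfm : Measurable f) (hinv : MeasurePreserving f μ μ) {φ : X → ℝ} (hφm : Measurable φ)
    {C : ℝ} (hC0 : 0 ≤ C) (hC : ∀ x, |φ x| ≤ C) :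
    ∀ᵐ x ∂μ, Tendsto (fun n : ℕ => birkhoffSum' f φ n x / n) atTop
      (𝓝 (limsup (fun n : ℕ => birkhoffSum' f φ n x / n) atTop)) := by
  classical
  set φund : X → ℝ := fun x => liminf (fun n : ℕ => birkhoffSum' f φ n x / n) atTop with hund
  set φbar : X → ℝ := fun x => limsup (fun n : ℕ => birkhoffSum' f φ n x / n) atTop with hbar
  set F : ℚ × ℚ → Set X := fun p =>
    if ((p.1 : ℝ) < (p.2 : ℝ)) then {x | φund x < p.1 ∧ (p.2 : ℝ) < φbar x} else ∅ with hF
  have hnull : μ (⋃ p : ℚ × ℚ, F p) = 0 := by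
    refine measure_iUnion_null fun p => ?_
    rw [hF]
    dsimp only
    split
    · exact birkhoff_cross_null μ hfm hinv hφm hC0 hC (by assumption)
    · exact measure_empty
  have hsub : {x | φund x < φbar x} ⊆ ⋃ p : ℚ × ℚ, F p := by
    intro x hx
    have hx' : φund x < φbar x := hx
    obtain ⟨q, hq1, hq2⟩ := exists_rat_btwn hx'
    obtain ⟨r, hr1, hr2⟩ := exists_rat_btwn hq2
    refine Set.mem_iUnion.2 ⟨(q, r), ?_⟩
    rw [hF]
    dsimp only
    rw [if_pos (by exact_mod_cast hr1)]
    exact ⟨hq1, hr2⟩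
  have h1 : μ {x | φund x < φbar x} = 0 := measure_mono_null hsub hnull
  have hae : ∀ᵐ x ∂μ, φbar x ≤ φund x := by
    rw [ae_iff]
    simp only [not_le]
    exact h1
  filter_upwards [hae] with x hx
  have heq : liminf (fun n : ℕ => birkhoffSum' f φ n x / n) atTop
      = limsup (fun n : ℕ => birkhoffSum' f φ n x / n) atTop :=
    le_antisymm (liminf_le_limsup (avg_bddAbove f hC0 hC x) (avg_bddBelow f hC0 hC x)) hx
  exact tendsto_of_liminf_eq_limsup heq rfl
    (avg_bddAbove f hC0 hC x) (avg_bddBelow f hC0 hC x)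

end BirkhoffAE

theorem local_pressure_formula {X : Type*} [MetricSpace X] [CompactSpace X]
    [MeasurableSpace X] [BorelSpace X]
    (μ : Measure X) [IsProbabilityMeasure μ] [NullSingletonClass μ]
    (f : X → X) (hf : Continuous f) (hinv : MeasurePreserving f μ μ)
    (φ : X → ℝ) (hφ : Continuous φ)
    (hKS : ℝ)  -- the Kolmogorov–Sinai (metric) entropy `h_μ(f)`
    (hloc : X → ℝ)
    -- Brin–Katok theorem for the local entropy, assumed:
    (hBK : ∀ᵐ x ∂μ,
      Tendsto (fun ε : ℝ => limsup (fun n : ℕ => entSeq μ f x ε n) atTop)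
        (𝓝[>] 0) (𝓝 (hloc x)) ∧
      Tendsto (fun ε : ℝ => liminf (fun n : ℕ => entSeq μ f x ε n) atTop)
        (𝓝[>] 0) (𝓝 (hloc x)))
    (hlocInv : ∀ᵐ x ∂μ, hloc (f x) = hloc x)
    (hlocInt : Integrable hloc μ)
    (hlocEnt : ∫ x, hloc x ∂μ = hKS) :
    ∃ P : X → ℝ,
      -- the local pressure is defined μ-almost everywhere:
      (∀ᵐ x ∂μ,
        Tendsto (fun ε : ℝ => limsup (fun n : ℕ => presSeq μ f φ x ε n) atTop)
          (𝓝[>] 0) (𝓝 (P x)) ∧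
        Tendsto (fun ε : ℝ => liminf (fun n : ℕ => presSeq μ f φ x ε n) atTop)
          (𝓝[>] 0) (𝓝 (P x))) ∧
      -- it is f-invariant μ-almost everywhere:
      (∀ᵐ x ∂μ, P (f x) = P x) ∧
      -- and its integral is the metric pressure:
      Integrable P μ ∧ ∫ x, P x ∂μ = hKS + ∫ x, φ x ∂μ := by
  classical
  have hfm : Measurable f := hf.measurable
  have hφm : Measurable φ := hφ.measurable
  have hne : Nonempty X := by
    by_contra h
    rw [not_nonempty_iff] at h
    have h1 : μ univ = 1 := measure_univ
    rw [Set.univ_eq_empty_iff.2 h] at h1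
    simp at h1
  haveI := hne
  obtain ⟨z, -, hz⟩ := isCompact_univ.exists_isMaxOn Set.univ_nonempty
    (hφ.abs.continuousOn)
  set C : ℝ := |φ z| with hCdef
  have hC : ∀ x, |φ x| ≤ C := fun x => hz (Set.mem_univ x)
  have hC0 : 0 ≤ C := abs_nonneg _
  set φbar : X → ℝ := fun x => limsup (fun n : ℕ => birkhoffSum' f φ n x / n) atTop with hbar
  have havgm : ∀ n : ℕ, Measurable (fun x => birkhoffSum' f φ n x / n) := fun n =>
    (measurable_birkhoffSum' hfm hφm n).div_const _
  have hbarm : Measurable φbar := Measurable.limsup havgm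
  have hbarb : ∀ x, |φbar x| ≤ C := by
    intro x
    rw [abs_le]
    constructor
    · refine le_trans (le_liminf_of_le (avg_bddAbove f hC0 hC x).isCoboundedUnder_ge
        (Eventually.of_forall fun n => (abs_le.1 (abs_avg_le f hC0 hC n x)).1)) ?_
      exact liminf_le_limsup (avg_bddAbove f hC0 hC x) (avg_bddBelow f hC0 hC x)
    · exact limsup_le_of_le (avg_bddBelow f hC0 hC x).isCoboundedUnder_le
        (Eventually.of_forall fun n => (abs_le.1 (abs_avg_le f hC0 hC n x)).2)
  have hbar_int : Integrable φbar μ := integrable_of_abs_le μ hbarm hbarb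
  have hbar_inv : ∀ x, φbar (f x) = φbar x := fun x => limsup_avg_shift f hC0 hC x
  have hbirk : ∀ᵐ x ∂μ, Tendsto (fun n : ℕ => birkhoffSum' f φ n x / n) atTop
      (𝓝 (φbar x)) := birkhoff_ae μ hfm hinv hφm hC0 hC
  -- the integral of φbar is the integral of φ
  have hint_avg : ∀ n : ℕ, 1 ≤ n → ∫ x, birkhoffSum' f φ n x / n ∂μ = ∫ x, φ x ∂μ := by
    intro n hn
    have hSint : ∫ x, birkhoffSum' f φ n x ∂μ = n * ∫ x, φ x ∂μ := by
      unfold birkhoffSum'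
      rw [integral_finset_sum _ (fun i _ => integrable_of_abs_le
        (u := fun x => φ (f^[i] x)) μ (hφm.comp (hfm.iterate i)) (fun x => hC _))]
      have hterm : ∀ i ∈ Finset.range n, ∫ x, φ (f^[i] x) ∂μ = ∫ x, φ x ∂μ := fun i _ => by
        rw [← MeasureTheory.integral_map (hfm.iterate i).aemeasurable
          hφm.aestronglyMeasurable, (hinv.iterate i).map_eq]
      rw [Finset.sum_congr rfl hterm, Finset.sum_const, Finset.card_range, nsmul_eq_mul]
    have hne0 : (n:ℝ) ≠ 0 := by
      have : 0 < n := hn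
      positivity
    rw [integral_div, hSint, mul_comm, mul_div_assoc, div_self hne0, mul_one]
  have hDCT : Tendsto (fun n : ℕ => ∫ x, birkhoffSum' f φ n x / n ∂μ) atTop
      (𝓝 (∫ x, φbar x ∂μ)) := by
    refine tendsto_integral_of_dominated_convergence (fun _ => C)
      (fun n => (havgm n).aestronglyMeasurable) (integrable_const C)
      (fun n => ae_of_all _ fun x => ?_) hbirk
    rw [Real.norm_eq_abs]
    exact abs_avg_le f hC0 hC n x
  have hμφbar : ∫ x, φbar x ∂μ = ∫ x, φ x ∂μ := by
    refine tendsto_nhds_unique hDCT ?_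
    refine Tendsto.congr' ?_ (tendsto_const_nhds : Tendsto _ _ (𝓝 (∫ x, φ x ∂μ)))
    filter_upwards [eventually_ge_atTop 1] with n hn
    exact (hint_avg n hn).symm
  -- a.e. boundedness of entSeq
  have hbdd := ae_entSeq_bdd μ f hf
  refine ⟨fun x => hloc x + φbar x, ?_, ?_, hlocInt.add hbar_int, ?_⟩
  · filter_upwards [hBK, hbdd, hbirk] with x hxBK hxB hxT
    constructor
    · have hEq : ∀ᶠ ε in 𝓝[>] (0:ℝ),
          limsup (fun n : ℕ => entSeq μ f x ε n) atTop + φbar x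
            = limsup (fun n : ℕ => presSeq μ f φ x ε n) atTop := by
        filter_upwards [eventually_mem_nhdsWithin] with ε hε
        have hdecomp : (fun n : ℕ => presSeq μ f φ x ε n)
            = fun n : ℕ => entSeq μ f x ε n + birkhoffSum' f φ n x / n := by
          funext n
          unfold presSeq entSeq
          rw [add_div]
        rw [hdecomp]
        exact (limsup_add_tendsto (hxB ε hε)
          ⟨0, eventually_map.2 (Eventually.of_forall fun n => entSeq_nonneg μ f x ε n)⟩
          hxT).symm
      exact ((hxBK.1).add_const (φbar x)).congr' hEq
    · have hEq : ∀ᶠ ε in 𝓝[>] (0:ℝ),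
          liminf (fun n : ℕ => entSeq μ f x ε n) atTop + φbar x
            = liminf (fun n : ℕ => presSeq μ f φ x ε n) atTop := by
        filter_upwards [eventually_mem_nhdsWithin] with ε hε
        have hdecomp : (fun n : ℕ => presSeq μ f φ x ε n)
            = fun n : ℕ => entSeq μ f x ε n + birkhoffSum' f φ n x / n := by
          funext n
          unfold presSeq entSeq
          rw [add_div]
        rw [hdecomp]
        exact (liminf_add_tendsto (hxB ε hε)
          ⟨0, eventually_map.2 (Eventually.of_forall fun n => entSeq_nonneg μ f x ε n)⟩
          hxT).symm
      exact ((hxBK.2).add_const (φbar x)).congr' hEq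
  · filter_upwards [hlocInv] with x hx
    show hloc (f x) + φbar (f x) = hloc x + φbar x
    rw [hbar_inv x, hx]
  · rw [integral_add hlocInt hbar_int, hlocEnt, hμφbar]
end

section
/- If μ is a weak-Gibbs measure for f with respect to φ and P_top(f,φ) is finite, then for μ-almost every x ∈ X the local pressure equals the topological pressure: P_μ(x,f,φ) = P_top(f,φ). -/
open MeasureTheory Filter Set Topology

/-- `μ` is a weak-Gibbs measure for `f` with respect to `φ`, where `P` is the
topological pressure `P_top(f,φ)` (assumed finite). -/
def IsWeakGibbs {X : Type*} [MetricSpace X] [MeasurableSpace X]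
    (μ : Measure X) (f : X → X) (φ : X → ℝ) (P : ℝ) : Prop :=
  ∃ ε₀ > (0 : ℝ), ∃ Λ : Set X, μ Λᶜ = 0 ∧
    ∀ ε : ℝ, 0 < ε → ε < ε₀ → ∀ x ∈ Λ, ∃ δ : ℕ → ℝ,
      (∀ n, 0 < δ n) ∧
      Tendsto (fun n : ℕ => Real.log (δ n) / n) atTop (𝓝 0) ∧
      ∀ n : ℕ,
        (δ n)⁻¹ ≤ (μ (dynBall f x ε n)).toReal / Real.exp (-(P * n) + birkhoffSum' f φ n x) ∧
        (μ (dynBall f x ε n)).toReal / Real.exp (-(P * n) + birkhoffSum' f φ n x) ≤ δ n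

theorem weakGibbs_local_pressure_eq_top_pressure {X : Type*} [MetricSpace X] [CompactSpace X]
    [MeasurableSpace X] [BorelSpace X]
    (μ : Measure X) [IsProbabilityMeasure μ] [NullSingletonClass μ]
    (f : X → X) (hf : Continuous f) (hinv : MeasurePreserving f μ μ)
    (φ : X → ℝ) (hφ : Continuous φ)
    (Ptop : ℝ)  -- the (finite) topological pressure `P_top(f,φ)`
    (hGibbs : IsWeakGibbs μ f φ Ptop) :
    ∀ᵐ x ∂μ,
      Tendsto (fun ε : ℝ => limsup (fun n : ℕ => presSeq μ f φ x ε n) atTop)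
        (𝓝[>] 0) (𝓝 Ptop) ∧
      Tendsto (fun ε : ℝ => liminf (fun n : ℕ => presSeq μ f φ x ε n) atTop)
        (𝓝[>] 0) (𝓝 Ptop) := by
  obtain ⟨ε₀, hε₀, Λ, hΛ, hG⟩ := hGibbs
  refine eventually_of_mem (compl_mem_ae_iff.mpr hΛ) ?_
  intro x hx
  -- for each ε in (0, ε₀), presSeq tends to Ptop
  have key : ∀ ε : ℝ, 0 < ε → ε < ε₀ →
      Tendsto (fun n : ℕ => presSeq μ f φ x ε n) atTop (𝓝 Ptop) := by
    intro ε hε hεε₀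
    obtain ⟨δ, hδpos, hδlog, hδ⟩ := hG ε hε hεε₀ x (by simpa using hx)
    set a : ℕ → ℝ := fun n => (μ (dynBall f x ε n)).toReal with ha
    -- |log (a n) + Ptop * n - S_n| ≤ log (δ n)
    have hbound : ∀ n : ℕ,
        |Real.log (a n) + Ptop * n - birkhoffSum' f φ n x| ≤ Real.log (δ n) := by
      intro n
      obtain ⟨h1, h2⟩ := hδ n
      have hE : (0:ℝ) < Real.exp (-(Ptop * n) + birkhoffSum' f φ n x) := Real.exp_pos _
      have hapos : 0 < a n := by
        have := lt_of_lt_of_le (inv_pos.mpr (hδpos n)) h1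
        exact (div_pos_iff.mp this).resolve_right (fun h => absurd hE.le (not_le.mpr h.2)) |>.1
      have hlog1 : Real.log ((δ n)⁻¹) ≤ Real.log (a n / Real.exp (-(Ptop * n) + birkhoffSum' f φ n x)) :=
        Real.log_le_log (inv_pos.mpr (hδpos n)) h1
      have hlog2 : Real.log (a n / Real.exp (-(Ptop * n) + birkhoffSum' f φ n x)) ≤ Real.log (δ n) :=
        Real.log_le_log (div_pos hapos hE) h2
      rw [Real.log_div hapos.ne' hE.ne', Real.log_exp] at hlog1 hlog2
      rw [Real.log_inv] at hlog1
      rw [abs_le]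
      constructor <;> linarith
    -- the error term tends to 0
    have hdivle : ∀ n : ℕ, |(Real.log (a n) + Ptop * n - birkhoffSum' f φ n x) / n|
        ≤ Real.log (δ n) / n := by
      intro n
      rcases Nat.eq_zero_or_pos n with rfl | hn
      · simp
      · rw [abs_div, abs_of_nonneg (by positivity : (0:ℝ) ≤ (n:ℝ))]
        exact div_le_div_of_nonneg_right (hbound n) (by positivity)
    have herr : Tendsto (fun n : ℕ =>
        (Real.log (a n) + Ptop * n - birkhoffSum' f φ n x) / n) atTop (𝓝 0) := by
      have hneg : Tendsto (fun n : ℕ => -(Real.log (δ n) / n)) atTop (𝓝 0) := by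
        simpa using hδlog.neg
      refine tendsto_of_tendsto_of_tendsto_of_le_of_le hneg hδlog ?_ ?_
      · intro n
        have := hdivle n
        rw [abs_le] at this
        linarith [this.1]
      · intro n
        have := hdivle n
        rw [abs_le] at this
        exact this.2
    have hlim : Tendsto (fun n : ℕ =>
        Ptop - (Real.log (a n) + Ptop * n - birkhoffSum' f φ n x) / n) atTop (𝓝 Ptop) := by
      simpa using tendsto_const_nhds.sub herr
    refine hlim.congr' ?_
    filter_upwards [eventually_ge_atTop 1] with n hn
    have hn' : (n:ℝ) ≠ 0 := by positivity
    simp only [presSeq, ha]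
    field_simp
    ring
  -- both limsup and liminf are eventually constant Ptop near 0⁺
  have hev : ∀ᶠ ε in 𝓝[>] (0:ℝ), (0 < ε ∧ ε < ε₀) :=
    eventually_of_mem (Ioo_mem_nhdsGT_of_mem ⟨le_refl 0, hε₀⟩) (fun ε hε => ⟨hε.1, hε.2⟩)
  constructor
  · refine Tendsto.congr' ?_ tendsto_const_nhds
    filter_upwards [hev] with ε ⟨h1, h2⟩
    exact ((key ε h1 h2).limsup_eq).symm
  · refine Tendsto.congr' ?_ tendsto_const_nhds
    filter_upwards [hev] with ε ⟨h1, h2⟩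
    exact ((key ε h1 h2).liminf_eq).symm
end

section
/- Let f : X → X be a continuous map on a compact metric space with finite topological entropy, preserving a Borel non-atomic probability measure μ, and let φ : X → ℝ be continuous. If μ is a weak-Gibbs measure for f with respect to φ, then μ is an equilibrium state, i.e. h_μ(f) + ∫ φ dμ = P_top(f,φ). -/
open MeasureTheory Filter Set Topology

theorem weakGibbs_is_equilibrium_state {X : Type*} [MetricSpace X] [CompactSpace X]
    [MeasurableSpace X] [BorelSpace X]
    (μ : Measure X) [IsProbabilityMeasure μ] [NullSingletonClass μ]
    (f : X → X) (hf : Continuous f) (hinv : MeasurePreserving f μ μ)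
    (φ : X → ℝ) (hφ : Continuous φ)
    (htop : ℝ)   -- the (finite) topological entropy `h_top(f)`
    (Ptop : ℝ)   -- the topological pressure `P_top(f,φ)`, finite since `h_top(f) < ∞`
    (hKS : ℝ)    -- the metric entropy `h_μ(f)`
    -- the Variational Principle, assumed:
    (hVP : hKS + ∫ x, φ x ∂μ ≤ Ptop)
    -- the local pressure formula (Theorem A), assumed: there is an integrable local
    -- pressure function whose μ-a.e. values are the limits over dynamical balls and
    -- whose integral is the metric pressure `h_μ(f) + ∫ φ dμ`:
    (P : X → ℝ)
    (hPlim : ∀ᵐ x ∂μ,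
      Tendsto (fun ε : ℝ => limsup (fun n : ℕ => presSeq μ f φ x ε n) atTop)
        (𝓝[>] 0) (𝓝 (P x)) ∧
      Tendsto (fun ε : ℝ => liminf (fun n : ℕ => presSeq μ f φ x ε n) atTop)
        (𝓝[>] 0) (𝓝 (P x)))
    (hPint : Integrable P μ)
    (hPeq : ∫ x, P x ∂μ = hKS + ∫ x, φ x ∂μ)
    -- `μ` is a weak-Gibbs measure for `f` with respect to `φ`:
    (hGibbs : IsWeakGibbs μ f φ Ptop) :
    hKS + ∫ x, φ x ∂μ = Ptop := by
  obtain ⟨ε₀, hε₀, Λ, hΛ, hG⟩ := hGibbs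
  have hΛae : ∀ᵐ x ∂μ, x ∈ Λ := by
    rw [ae_iff]
    exact hΛ
  have key : ∀ᵐ x ∂μ, P x = Ptop := by
    filter_upwards [hΛae, hPlim] with x hxΛ hx
    obtain ⟨hls, _⟩ := hx
    have heq : ∀ ε ∈ Ioo (0:ℝ) ε₀,
        limsup (fun n : ℕ => presSeq μ f φ x ε n) atTop = Ptop := by
      intro ε hε
      obtain ⟨δ, hδpos, hδlim, hδbd⟩ := hG ε hε.1 hε.2 x hxΛ
      set r : ℕ → ℝ := fun n =>
        (μ (dynBall f x ε n)).toReal / Real.exp (-(Ptop * n) + birkhoffSum' f φ n x) with hr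
      have hrpos : ∀ n, 0 < r n := fun n =>
        lt_of_lt_of_le (inv_pos.mpr (hδpos n)) (hδbd n).1
      have hBpos : ∀ n, 0 < (μ (dynBall f x ε n)).toReal := by
        intro n
        rcases div_pos_iff.mp (hrpos n) with ⟨h, _⟩ | ⟨_, h⟩
        · exact h
        · exact absurd h (not_lt.mpr (Real.exp_pos _).le)
      have hglb : ∀ n, -(Real.log (δ n)) ≤ Real.log (r n) := by
        intro n
        have := Real.log_le_log (inv_pos.mpr (hδpos n)) (hδbd n).1
        rwa [Real.log_inv] at this
      have hgub : ∀ n, Real.log (r n) ≤ Real.log (δ n) :=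
        fun n => Real.log_le_log (hrpos n) (hδbd n).2
      have hg0 : Tendsto (fun n : ℕ => Real.log (r n) / n) atTop (𝓝 0) := by
        have hneg : Tendsto (fun n : ℕ => -(Real.log (δ n) / n)) atTop (𝓝 0) := by
          simpa using hδlim.neg
        refine tendsto_of_tendsto_of_tendsto_of_le_of_le hneg hδlim ?_ ?_
        · intro n
          show -(Real.log (δ n) / n) ≤ Real.log (r n) / n
          rw [← neg_div]
          rcases Nat.eq_zero_or_pos n with h0 | h0
          · simp [h0]
          · have hn : (0:ℝ) < n := by exact_mod_cast h0
            exact div_le_div_of_nonneg_right (hglb n) hn.le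
        · intro n
          show Real.log (r n) / n ≤ Real.log (δ n) / n
          rcases Nat.eq_zero_or_pos n with h0 | h0
          · simp [h0]
          · have hn : (0:ℝ) < n := by exact_mod_cast h0
            exact div_le_div_of_nonneg_right (hgub n) hn.le
      have hconv : Tendsto (fun n : ℕ => presSeq μ f φ x ε n) atTop (𝓝 Ptop) := by
        have h1 : Tendsto (fun n : ℕ => Ptop - Real.log (r n) / n) atTop (𝓝 Ptop) := by
          simpa using tendsto_const_nhds.sub hg0
        refine h1.congr' ?_
        filter_upwards [eventually_ge_atTop 1] with n hn
        have hn0 : (n:ℝ) ≠ 0 := by positivity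
        have hlogr : Real.log (r n)
            = Real.log ((μ (dynBall f x ε n)).toReal)
              - (-(Ptop * n) + birkhoffSum' f φ n x) := by
          rw [hr]
          rw [Real.log_div (ne_of_gt (hBpos n)) (Real.exp_ne_zero _), Real.log_exp]
        rw [presSeq, hlogr]
        field_simp
        ring
      exact hconv.limsup_eq
    have h1 : Tendsto (fun ε : ℝ => limsup (fun n : ℕ => presSeq μ f φ x ε n) atTop)
        (𝓝[>] (0:ℝ)) (𝓝 Ptop) := by
      refine Tendsto.congr' ?_ tendsto_const_nhds
      filter_upwards [Ioo_mem_nhdsGT_of_mem (by simp [hε₀] : (0:ℝ) ∈ Ico (0:ℝ) ε₀)]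
        with ε hε
      exact (heq ε hε).symm
    exact tendsto_nhds_unique hls h1
  have hint : ∫ x, P x ∂μ = Ptop := by
    rw [integral_congr_ae key]
    simp
  rw [← hPeq, hint]
end
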